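/- arXiv:1805.03638 — 3 statements merged into one kernel-verified Lean document; each statement's English description precedes it below -/
import Mathlib

section
/- If w : D → C is analytic on the open unit disk with |w(ζ)| ≤ 1 for all ζ, and the liminf of (1 - |w(ζ)|²)/(1 - |ζ|²) as ζ → t₀ (with t₀ on the unit circle, ζ in the disk) equals 0, then w is a constant function of modulus 1. -/
open Metric Topology Filter

lemma normSq_key (a u : ℂ) :
    Complex.normSq (1 - (starRingEnd ℂ) a * u) - Complex.normSq (u - a) =
      (1 - Complex.normSq a) * (1 - Complex.normSq u) := by
  simp only [Complex.normSq_apply, Complex.sub_re, Complex.sub_im, Complex.one_re,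
    Complex.one_im, Complex.mul_re, Complex.mul_im, Complex.conj_re, Complex.conj_im]
  ring

/-- If `w` is analytic on the open unit disk with `‖w ζ‖ ≤ 1`, `t₀` is on the unit
circle, and `liminf_{ζ → t₀, ζ ∈ 𝔻} (1 - ‖w ζ‖²)/(1 - ‖ζ‖²) = 0`, then `w` is a
constant function of modulus `1`. -/
theorem stmt_0 (w : ℂ → ℂ) (t₀ : ℂ)
    (hw : DifferentiableOn ℂ w (ball (0 : ℂ) 1))
    (hb : ∀ ζ ∈ ball (0 : ℂ) 1, ‖w ζ‖ ≤ 1)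
    (ht₀ : ‖t₀‖ = 1)
    (hlim : Filter.liminf
        (fun ζ : ℂ => (((1 - ‖w ζ‖ ^ 2) / (1 - ‖ζ‖ ^ 2) : ℝ) : EReal))
        (𝓝[ball (0 : ℂ) 1] t₀) = 0) :
    ∃ c : ℂ, ‖c‖ = 1 ∧ ∀ ζ ∈ ball (0 : ℂ) 1, w ζ = c := by
  by_cases hmax : ∃ z ∈ ball (0 : ℂ) 1, ‖w z‖ = 1
  · -- maximum modulus case
    obtain ⟨z, hz, hz1⟩ := hmax
    refine ⟨w z, hz1, fun ζ hζ => ?_⟩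
    have hmaxOn : IsMaxOn (norm ∘ w) (ball (0 : ℂ) 1) z := by
      intro y hy
      simp only [Function.comp_apply, Set.mem_setOf_eq, hz1]
      exact hb y hy
    exact Complex.eqOn_of_isPreconnected_of_isMaxOn_norm
      (convex_ball (0 : ℂ) 1).isPreconnected isOpen_ball hw hz hmaxOn hζ
  · -- strict case: ‖w ζ‖ < 1 for all ζ
    exfalso
    push_neg at hmax
    have hlt : ∀ ζ ∈ ball (0 : ℂ) 1, ‖w ζ‖ < 1 := fun ζ hζ =>
      lt_of_le_of_ne (hb ζ hζ) (hmax ζ hζ)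
    set a : ℂ := w 0 with ha
    have h0 : (0 : ℂ) ∈ ball (0 : ℂ) 1 := by simp
    have haa : ‖a‖ < 1 := hlt 0 h0
    -- denominator nonzero
    have hden : ∀ ζ ∈ ball (0 : ℂ) 1, 1 - (starRingEnd ℂ) a * w ζ ≠ 0 := by
      intro ζ hζ h
      have : ‖(starRingEnd ℂ) a * w ζ‖ < 1 := by
        rw [norm_mul, RCLike.norm_conj]
        calc ‖a‖ * ‖w ζ‖ ≤ ‖a‖ * 1 := by
              exact mul_le_mul_of_nonneg_left (hb ζ hζ) (norm_nonneg _)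
          _ < 1 := by simpa using haa
      rw [sub_eq_zero] at h
      rw [← h] at this
      simp at this
    set g : ℂ → ℂ := fun ζ => (w ζ - a) / (1 - (starRingEnd ℂ) a * w ζ) with hg
    have hgd : DifferentiableOn ℂ g (ball (0 : ℂ) 1) := by
      apply DifferentiableOn.div
      · exact hw.sub_const a
      · exact (differentiableOn_const _).sub
          ((differentiableOn_const _).mul hw)
      · exact hden
    have hkey : ∀ ζ ∈ ball (0 : ℂ) 1,
        Complex.normSq (1 - (starRingEnd ℂ) a * w ζ) - Complex.normSq (w ζ - a) =
          (1 - Complex.normSq a) * (1 - Complex.normSq (w ζ)) := fun ζ _ =>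
      normSq_key a (w ζ)
    have hnormSq_lt : ∀ z : ℂ, ‖z‖ < 1 → Complex.normSq z < 1 := by
      intro z hz
      have h1 := Complex.sq_norm z
      nlinarith [norm_nonneg z]
    have hgmaps : Set.MapsTo g (ball (0 : ℂ) 1) (ball (0 : ℂ) 1) := by
      intro ζ hζ
      rw [mem_ball_zero_iff]
      have hd := hden ζ hζ
      have hdpos : 0 < Complex.normSq (1 - (starRingEnd ℂ) a * w ζ) :=
        Complex.normSq_pos.2 hd
      have h1 : Complex.normSq (w ζ - a) < Complex.normSq (1 - (starRingEnd ℂ) a * w ζ) := by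
        have := hkey ζ hζ
        have ha' : Complex.normSq a < 1 := hnormSq_lt a haa
        have hw' : Complex.normSq (w ζ) < 1 := hnormSq_lt _ (hlt ζ hζ)
        nlinarith
      rw [hg]
      simp only
      rw [norm_div, div_lt_one (by rwa [norm_pos_iff])]
      have : ∀ u : ℂ, ‖u‖ ^ 2 = Complex.normSq u := fun u => by
        exact Complex.sq_norm u
      nlinarith [this (w ζ - a), this (1 - (starRingEnd ℂ) a * w ζ), norm_nonneg (w ζ - a),
        norm_nonneg (1 - (starRingEnd ℂ) a * w ζ)]
    have hg0 : g 0 = 0 := by simp [hg, ha]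
    -- Schwarz lemma
    have hschwarz : ∀ ζ ∈ ball (0 : ℂ) 1, ‖g ζ‖ ≤ ‖ζ‖ := by
      intro ζ hζ
      have := Complex.norm_le_norm_of_mapsTo_ball hgd (hgmaps.mono_right ball_subset_closedBall) hg0
        (z := ζ) (by rwa [← mem_ball_zero_iff])
      simpa using this
    -- main estimate
    set c : ℝ := (1 - ‖a‖) / (1 + ‖a‖) with hc
    have hcpos : 0 < c := div_pos (by linarith) (by positivity)
    have hest : ∀ ζ ∈ ball (0 : ℂ) 1, c ≤ (1 - ‖w ζ‖ ^ 2) / (1 - ‖ζ‖ ^ 2) := by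
      intro ζ hζ
      have hζ1 : ‖ζ‖ < 1 := mem_ball_zero_iff.1 hζ
      have hζpos : 0 < 1 - ‖ζ‖ ^ 2 := by nlinarith [norm_nonneg ζ]
      rw [le_div_iff₀ hζpos]
      have hsq : ∀ u : ℂ, ‖u‖ ^ 2 = Complex.normSq u := fun u => by
        exact Complex.sq_norm u
      have hd := hden ζ hζ
      have hdpos : 0 < Complex.normSq (1 - (starRingEnd ℂ) a * w ζ) :=
        Complex.normSq_pos.2 hd
      -- 1 - ‖g ζ‖² ≥ 1 - ‖ζ‖²
      have hgs : ‖g ζ‖ ^ 2 ≤ ‖ζ‖ ^ 2 := by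
        have := hschwarz ζ hζ
        nlinarith [norm_nonneg (g ζ), norm_nonneg ζ]
      -- normSq identity: normSq (g ζ) = normSq (w ζ - a) / normSq (1 - conj a * w ζ)
      have hgnormSq : Complex.normSq (g ζ) * Complex.normSq (1 - (starRingEnd ℂ) a * w ζ)
          = Complex.normSq (w ζ - a) := by
        rw [hg]
        simp only
        rw [Complex.normSq_div]
        exact div_mul_cancel₀ _ hdpos.ne'
      -- lower bound on denominator norm
      have hdlb : (1 - ‖a‖) ^ 2 ≤ Complex.normSq (1 - (starRingEnd ℂ) a * w ζ) := by
        rw [← hsq]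
        have h1 : 1 - ‖a‖ ≤ ‖(1 : ℂ)‖ - ‖(starRingEnd ℂ) a * w ζ‖ := by
          rw [norm_one, norm_mul, RCLike.norm_conj]
          have : ‖a‖ * ‖w ζ‖ ≤ ‖a‖ := by
            calc ‖a‖ * ‖w ζ‖ ≤ ‖a‖ * 1 :=
              mul_le_mul_of_nonneg_left (hb ζ hζ) (norm_nonneg _)
            _ = ‖a‖ := mul_one _
          linarith
        have h2 : ‖(1 : ℂ)‖ - ‖(starRingEnd ℂ) a * w ζ‖ ≤ ‖1 - (starRingEnd ℂ) a * w ζ‖ :=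
          norm_sub_norm_le _ _
        nlinarith [norm_nonneg (1 - (starRingEnd ℂ) a * w ζ), haa.le, norm_nonneg a]
      have hkey' := hkey ζ hζ
      have hw' : Complex.normSq (w ζ) < 1 := hnormSq_lt _ (hlt ζ hζ)
      have ha' : Complex.normSq a < 1 := hnormSq_lt a haa
      -- 1 - normSq (w ζ) ≥ (1-‖ζ‖²) * normSq(den) / (1 - normSq a) ... combine
      have hgid : (1 - Complex.normSq (g ζ)) * Complex.normSq (1 - (starRingEnd ℂ) a * w ζ)
          = (1 - Complex.normSq a) * (1 - Complex.normSq (w ζ)) := by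
        have := hkey ζ hζ
        nlinarith [hgnormSq]
      have hgsq : Complex.normSq (g ζ) ≤ ‖ζ‖ ^ 2 := by
        rw [← hsq]; exact hgs
      have hcle : c * (1 - Complex.normSq a) ≤ (1 - ‖a‖) ^ 2 := by
        rw [hc]
        have hden2 : (0:ℝ) < 1 + ‖a‖ := by positivity
        rw [div_mul_eq_mul_div, div_le_iff₀ hden2]
        have : 1 - Complex.normSq a = (1 - ‖a‖) * (1 + ‖a‖) := by
          rw [← hsq]; ring
        rw [this]; nlinarith [norm_nonneg a]
      have hfin : c * (1 - ‖ζ‖ ^ 2) ≤ 1 - Complex.normSq (w ζ) := by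
        have hstep : (1 - ‖ζ‖ ^ 2) * (1 - ‖a‖) ^ 2
            ≤ (1 - Complex.normSq (g ζ)) * Complex.normSq (1 - (starRingEnd ℂ) a * w ζ) := by
          have h1 : 1 - ‖ζ‖ ^ 2 ≤ 1 - Complex.normSq (g ζ) := by linarith
          have h2 : 0 ≤ 1 - Complex.normSq (g ζ) := by
            nlinarith [Complex.normSq_nonneg (g ζ), norm_nonneg ζ]
          nlinarith [Complex.normSq_nonneg (g ζ)]
        rw [hgid] at hstep
        have hcma : 0 < 1 - Complex.normSq a := by linarith
        nlinarith [hcpos.le]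
      rw [hsq (w ζ)]
      linarith
    -- liminf lower bound, contradiction
    have hne : (𝓝[ball (0 : ℂ) 1] t₀).NeBot := by
      rw [← mem_closure_iff_nhdsWithin_neBot, closure_ball (0 : ℂ) one_ne_zero,
        mem_closedBall_zero_iff]
      exact le_of_eq ht₀
    have hev : ∀ᶠ ζ in 𝓝[ball (0 : ℂ) 1] t₀,
        ((c : ℝ) : EReal) ≤ (((1 - ‖w ζ‖ ^ 2) / (1 - ‖ζ‖ ^ 2) : ℝ) : EReal) := by
      filter_upwards [self_mem_nhdsWithin] with ζ hζ
      exact_mod_cast EReal.coe_le_coe_iff.2 (hest ζ hζ)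
    have := Filter.le_liminf_of_le (by isBoundedDefault) hev
    rw [hlim] at this
    have : (c : ℝ) ≤ (0 : ℝ) := by exact_mod_cast this
    linarith
end

section
/- If points ζ₁,…,ζₙ in the open unit disk and complex numbers w₁,…,wₙ are such that there exists an analytic function w on the disk with |w| ≤ 1 and w(ζₖ) = wₖ for all k, then the Pick matrix [(1 - conj(wₖ)wⱼ)/(1 - conj(ζₖ)ζⱼ)]_{k,j=1}^n is positive semidefinite. -/
open Metric ComplexConjugate ComplexOrder Complex intervalIntegral Real

noncomputable def pickK (r : ℝ) (c : ℂ) (z : ℂ) : ℂ := (r:ℂ)^2 / ((r:ℂ)^2 - conj c * z)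

lemma pick_den_ne {r : ℝ} (hr : 0 < r) {c z : ℂ} (hc : ‖c‖ < r) (hz : ‖z‖ ≤ r) :
    (r:ℂ)^2 - conj c * z ≠ 0 := by
  intro h
  rw [sub_eq_zero] at h
  have := congrArg norm h
  rw [norm_pow, Complex.norm_real, Real.norm_eq_abs, abs_of_pos hr, norm_mul,
    RCLike.norm_conj] at this
  nlinarith [norm_nonneg c, norm_nonneg z]

lemma pickK_diff {r : ℝ} (hr : 0 < r) {c : ℂ} (hc : ‖c‖ < r) :
    DifferentiableOn ℂ (pickK r c) (closedBall (0:ℂ) r) := by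
  apply DifferentiableOn.div (differentiableOn_const _)
  · exact (differentiableOn_const _).sub ((differentiableOn_const _).mul differentiableOn_id)
  · intro z hz
    exact pick_den_ne hr hc (by simpa [mem_closedBall_zero_iff] using hz)

lemma pickK_cont_circle {r : ℝ} (hr : 0 < r) {c : ℂ} (hc : ‖c‖ < r) :
    Continuous (fun θ : ℝ => pickK r c (circleMap 0 r θ)) := by
  apply Continuous.div continuous_const
  · exact continuous_const.sub (continuous_const.mul (continuous_circleMap 0 r))
  · intro θ
    exact pick_den_ne hr hc (by simp [abs_of_pos hr])

lemma pick_reproducing {r : ℝ} (hr : 0 < r) {g : ℂ → ℂ}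
    (hg : DiffContOnCl ℂ g (ball (0:ℂ) r)) {a : ℂ} (ha : ‖a‖ < r) :
    (∫ θ in (0:ℝ)..(2*π), g (circleMap 0 r θ) *
      conj (pickK r a (circleMap 0 r θ))) = 2 * π * g a := by
  simp only [pickK]
  have h1 : (∮ z in C(0, r), (z - a)⁻¹ • g z) = (2 * ↑π * I : ℂ) • g a :=
    hg.circleIntegral_sub_inv_smul (by simpa using ha)
  rw [circleIntegral] at h1
  have key : ∀ θ : ℝ, deriv (circleMap 0 r) θ • ((circleMap 0 r θ - a)⁻¹ • g (circleMap 0 r θ))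
      = I * (g (circleMap 0 r θ) *
        conj ((r:ℂ)^2 / ((r:ℂ)^2 - conj a * circleMap 0 r θ))) := by
    intro θ
    set z := circleMap 0 r θ with hz
    have hzn : ‖z‖ = r := by
      simp [hz, circleMap, abs_of_pos hr]
    have hzz : z * conj z = ((r:ℂ))^2 := by
      rw [Complex.mul_conj]
      norm_cast
      rw [Complex.normSq_eq_norm_sq, hzn]
    have hza : z - a ≠ 0 := by
      intro h
      rw [sub_eq_zero] at h
      rw [← h, hzn] at ha
      exact lt_irrefl _ ha
    have hdenc : ((r:ℂ))^2 - a * conj z ≠ 0 := by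
      intro h
      rw [sub_eq_zero] at h
      have := congrArg norm h
      rw [norm_pow, Complex.norm_real, Real.norm_eq_abs, abs_of_pos hr, norm_mul,
        RCLike.norm_conj, hzn] at this
      nlinarith [norm_nonneg a]
    rw [deriv_circleMap]
    simp only [smul_eq_mul, map_div₀, map_sub, map_mul, map_pow, Complex.conj_conj, Complex.conj_ofReal]
    rw [← hz]
    field_simp
    linear_combination (-(g z * a)) * hzz
  rw [intervalIntegral.integral_congr (g := fun θ => I * (g (circleMap 0 r θ) *
        conj ((r:ℂ)^2 / ((r:ℂ)^2 - conj a * circleMap 0 r θ)))) (fun θ _ => key θ)] at h1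
  rw [intervalIntegral.integral_const_mul] at h1
  have hI : (I : ℂ) ≠ 0 := Complex.I_ne_zero
  have h2 : I * (∫ θ in (0:ℝ)..(2*π), g (circleMap 0 r θ) *
      conj ((r:ℂ)^2 / ((r:ℂ)^2 - conj a * circleMap 0 r θ))) = I * (2 * π * g a) := by
    rw [h1]; simp [smul_eq_mul]; ring
  exact mul_left_cancel₀ hI h2

lemma pick_key (n : ℕ) (ζ w : Fin n → ℂ) (f : ℂ → ℂ)
    (hf : DifferentiableOn ℂ f (ball (0:ℂ) 1))
    (hb : ∀ z ∈ ball (0:ℂ) 1, ‖f z‖ ≤ 1)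
    (hint : ∀ k, f (ζ k) = w k)
    (x : Fin n → ℂ) (r : ℝ) (hr0 : 0 < r) (hr1 : r < 1) (hrζ : ∀ k, ‖ζ k‖ < r) :
    ∃ t : ℝ, 0 ≤ t ∧
      (∑ k, ∑ j, conj (x k) * ((1 - conj (w k) * w j) * pickK r (ζ k) (ζ j)) * x j) = (t : ℂ) := by
  -- basic sets
  have hsub : closedBall (0:ℂ) r ⊆ ball (0:ℂ) 1 := closedBall_subset_ball hr1
  have hcl : closure (ball (0:ℂ) r) = closedBall (0:ℂ) r := closure_ball 0 (ne_of_gt hr0)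
  have hcirc_mem : ∀ θ : ℝ, circleMap 0 r θ ∈ closedBall (0:ℂ) r := by
    intro θ; simp [mem_closedBall_zero_iff, abs_of_pos hr0]
  -- the functions
  set hfun : ℂ → ℂ := fun z => ∑ j, conj (x j) * pickK r (ζ j) z with hhfun
  set pfun : ℂ → ℂ := fun z => ∑ j, (conj (x j) * conj (w j)) * pickK r (ζ j) z with hpfun
  -- differentiability
  have hhd : DifferentiableOn ℂ hfun (closedBall (0:ℂ) r) := by
    apply DifferentiableOn.fun_sum
    intro j _
    exact (pickK_diff hr0 (hrζ j)).const_mul _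
  have hpd : DifferentiableOn ℂ pfun (closedBall (0:ℂ) r) := by
    apply DifferentiableOn.fun_sum
    intro j _
    exact (pickK_diff hr0 (hrζ j)).const_mul _
  have hfd : DifferentiableOn ℂ f (closedBall (0:ℂ) r) := hf.mono hsub
  have hfpd : DifferentiableOn ℂ (fun z => f z * pfun z) (closedBall (0:ℂ) r) := hfd.mul hpd
  have toCl : ∀ {g : ℂ → ℂ}, DifferentiableOn ℂ g (closedBall (0:ℂ) r) →
      DiffContOnCl ℂ g (ball (0:ℂ) r) := by
    intro g hg
    exact DifferentiableOn.diffContOnCl (by rwa [hcl])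
  -- continuity on the circle
  have contH : Continuous (fun θ : ℝ => hfun (circleMap 0 r θ)) := by
    apply continuous_finset_sum
    intro j _
    exact continuous_const.mul (pickK_cont_circle hr0 (hrζ j))
  have contP : Continuous (fun θ : ℝ => pfun (circleMap 0 r θ)) := by
    apply continuous_finset_sum
    intro j _
    exact continuous_const.mul (pickK_cont_circle hr0 (hrζ j))
  have contF : Continuous (fun θ : ℝ => f (circleMap 0 r θ)) :=
    (hfd.continuousOn).comp_continuous (continuous_circleMap 0 r) hcirc_mem
  have contFP : Continuous (fun θ : ℝ => f (circleMap 0 r θ) * pfun (circleMap 0 r θ)) :=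
    contF.mul contP
  have contKc : ∀ k, Continuous (fun θ : ℝ => conj (pickK r (ζ k) (circleMap 0 r θ))) :=
    fun k => Complex.continuous_conj.comp (pickK_cont_circle hr0 (hrζ k))
  -- moments
  have Mh : ∀ k, (∫ θ in (0:ℝ)..(2*π), hfun (circleMap 0 r θ) *
      conj (pickK r (ζ k) (circleMap 0 r θ))) = 2 * π * hfun (ζ k) :=
    fun k => pick_reproducing hr0 (toCl hhd) (hrζ k)
  have Mp : ∀ k, (∫ θ in (0:ℝ)..(2*π), pfun (circleMap 0 r θ) *
      conj (pickK r (ζ k) (circleMap 0 r θ))) = 2 * π * pfun (ζ k) :=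
    fun k => pick_reproducing hr0 (toCl hpd) (hrζ k)
  have Mfp : ∀ k, (∫ θ in (0:ℝ)..(2*π), (f (circleMap 0 r θ) * pfun (circleMap 0 r θ)) *
      conj (pickK r (ζ k) (circleMap 0 r θ))) = 2 * π * (w k * pfun (ζ k)) := by
    intro k
    have := pick_reproducing hr0 (toCl hfpd) (hrζ k)
    rw [this, hint k]
  -- conj expansions
  have conjH : ∀ θ : ℝ, conj (hfun (circleMap 0 r θ)) =
      ∑ k, x k * conj (pickK r (ζ k) (circleMap 0 r θ)) := by
    intro θ
    simp only [hhfun, map_sum, map_mul, Complex.conj_conj]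
  have conjP : ∀ θ : ℝ, conj (pfun (circleMap 0 r θ)) =
      ∑ k, (x k * w k) * conj (pickK r (ζ k) (circleMap 0 r θ)) := by
    intro θ
    simp only [hpfun, map_sum, map_mul, Complex.conj_conj]
  -- generic expansion of integrals against conj of kernels
  have expand : ∀ (d : Fin n → ℂ) (q : ℝ → ℂ), Continuous q →
      (∫ θ in (0:ℝ)..(2*π), q θ * (∑ k, d k * conj (pickK r (ζ k) (circleMap 0 r θ))))
        = ∑ k, d k * (∫ θ in (0:ℝ)..(2*π), q θ * conj (pickK r (ζ k) (circleMap 0 r θ))) := by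
    intro d q hq
    have : (fun θ : ℝ => q θ * (∑ k, d k * conj (pickK r (ζ k) (circleMap 0 r θ))))
        = fun θ : ℝ => ∑ k, d k * (q θ * conj (pickK r (ζ k) (circleMap 0 r θ))) := by
      funext θ
      rw [Finset.mul_sum]
      exact Finset.sum_congr rfl (fun k _ => by ring)
    rw [this, intervalIntegral.integral_finset_sum]
    · exact Finset.sum_congr rfl (fun k _ => intervalIntegral.integral_const_mul _ _)
    · intro k _
      exact (continuous_const.mul (hq.mul (contKc k))).intervalIntegrable _ _
  -- real quantities
  set Nr : ℝ := ∫ θ in (0:ℝ)..(2*π), Complex.normSq (hfun (circleMap 0 r θ)) with hNr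
  set Pr : ℝ := ∫ θ in (0:ℝ)..(2*π), Complex.normSq (pfun (circleMap 0 r θ)) with hPr
  set Fr : ℝ := ∫ θ in (0:ℝ)..(2*π),
    Complex.normSq (f (circleMap 0 r θ) * pfun (circleMap 0 r θ)) with hFr
  set Er : ℝ := ∫ θ in (0:ℝ)..(2*π), Complex.normSq
    (hfun (circleMap 0 r θ) - f (circleMap 0 r θ) * pfun (circleMap 0 r θ)) with hEr
  -- complex identities
  have INr : ((Nr : ℝ) : ℂ) = 2 * π * ∑ k, x k * hfun (ζ k) := by
    rw [hNr, ← intervalIntegral.integral_ofReal]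
    have : (fun θ : ℝ => ((Complex.normSq (hfun (circleMap 0 r θ)) : ℝ) : ℂ))
        = fun θ : ℝ => hfun (circleMap 0 r θ) * conj (hfun (circleMap 0 r θ)) := by
      funext θ; rw [Complex.mul_conj]
    rw [this]
    have : (∫ θ in (0:ℝ)..(2*π), hfun (circleMap 0 r θ) * conj (hfun (circleMap 0 r θ)))
        = ∫ θ in (0:ℝ)..(2*π), hfun (circleMap 0 r θ) *
            (∑ k, x k * conj (pickK r (ζ k) (circleMap 0 r θ))) := by
      apply intervalIntegral.integral_congr
      intro θ _
      dsimp only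
      rw [conjH θ]
    rw [this, expand _ _ contH, Finset.mul_sum]
    exact Finset.sum_congr rfl (fun k _ => by rw [Mh k]; ring)
  have IPr : ((Pr : ℝ) : ℂ) = 2 * π * ∑ k, x k * (w k * pfun (ζ k)) := by
    rw [hPr, ← intervalIntegral.integral_ofReal]
    have : (fun θ : ℝ => ((Complex.normSq (pfun (circleMap 0 r θ)) : ℝ) : ℂ))
        = fun θ : ℝ => pfun (circleMap 0 r θ) * conj (pfun (circleMap 0 r θ)) := by
      funext θ; rw [Complex.mul_conj]
    rw [this]
    have : (∫ θ in (0:ℝ)..(2*π), pfun (circleMap 0 r θ) * conj (pfun (circleMap 0 r θ)))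
        = ∫ θ in (0:ℝ)..(2*π), pfun (circleMap 0 r θ) *
            (∑ k, (x k * w k) * conj (pickK r (ζ k) (circleMap 0 r θ))) := by
      apply intervalIntegral.integral_congr
      intro θ _
      dsimp only
      rw [conjP θ]
    rw [this, expand _ _ contP, Finset.mul_sum]
    exact Finset.sum_congr rfl (fun k _ => by rw [Mp k]; ring)
  have ICross : (∫ θ in (0:ℝ)..(2*π), (f (circleMap 0 r θ) * pfun (circleMap 0 r θ)) *
      conj (hfun (circleMap 0 r θ))) = ((Pr : ℝ) : ℂ) := by
    have : (∫ θ in (0:ℝ)..(2*π), (f (circleMap 0 r θ) * pfun (circleMap 0 r θ)) *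
        conj (hfun (circleMap 0 r θ)))
        = ∫ θ in (0:ℝ)..(2*π), (f (circleMap 0 r θ) * pfun (circleMap 0 r θ)) *
            (∑ k, x k * conj (pickK r (ζ k) (circleMap 0 r θ))) := by
      apply intervalIntegral.integral_congr
      intro θ _
      dsimp only
      rw [conjH θ]
    rw [this, expand _ _ contFP, IPr, Finset.mul_sum]
    exact Finset.sum_congr rfl (fun k _ => by rw [Mfp k]; ring)
  have ICross' : (∫ θ in (0:ℝ)..(2*π), hfun (circleMap 0 r θ) *
      conj (f (circleMap 0 r θ) * pfun (circleMap 0 r θ))) = ((Pr : ℝ) : ℂ) := by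
    have : (fun θ : ℝ => hfun (circleMap 0 r θ) *
        conj (f (circleMap 0 r θ) * pfun (circleMap 0 r θ)))
        = fun θ : ℝ => conj ((f (circleMap 0 r θ) * pfun (circleMap 0 r θ)) *
            conj (hfun (circleMap 0 r θ))) := by
      funext θ; simp only [map_mul, Complex.conj_conj]; ring
    rw [this]
    have hconjint : (∫ θ in (0:ℝ)..(2*π), conj ((f (circleMap 0 r θ) * pfun (circleMap 0 r θ)) *
        conj (hfun (circleMap 0 r θ))))
        = conj (∫ θ in (0:ℝ)..(2*π), (f (circleMap 0 r θ) * pfun (circleMap 0 r θ)) *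
            conj (hfun (circleMap 0 r θ))) := by
      simp only [intervalIntegral]
      rw [map_sub (starRingEnd ℂ), integral_conj, integral_conj]
    rw [hconjint, ICross, Complex.conj_ofReal]
  have IFr : ((Fr : ℝ) : ℂ) = ∫ θ in (0:ℝ)..(2*π),
      (f (circleMap 0 r θ) * pfun (circleMap 0 r θ)) *
        conj (f (circleMap 0 r θ) * pfun (circleMap 0 r θ)) := by
    rw [hFr, ← intervalIntegral.integral_ofReal]
    apply intervalIntegral.integral_congr
    intro θ _
    dsimp only
    rw [Complex.mul_conj]
  have IHH : (∫ θ in (0:ℝ)..(2*π), hfun (circleMap 0 r θ) * conj (hfun (circleMap 0 r θ)))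
      = ((Nr : ℝ) : ℂ) := by
    rw [hNr, ← intervalIntegral.integral_ofReal]
    apply intervalIntegral.integral_congr
    intro θ _
    dsimp only
    rw [Complex.mul_conj]
  -- the energy expansion
  have hintHH : IntervalIntegrable (fun θ : ℝ => hfun (circleMap 0 r θ) *
      conj (hfun (circleMap 0 r θ))) MeasureTheory.volume 0 (2*π) :=
    (contH.mul (Complex.continuous_conj.comp contH)).intervalIntegrable _ _
  have hintHFP : IntervalIntegrable (fun θ : ℝ => hfun (circleMap 0 r θ) *
      conj (f (circleMap 0 r θ) * pfun (circleMap 0 r θ))) MeasureTheory.volume 0 (2*π) :=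
    (contH.mul (Complex.continuous_conj.comp contFP)).intervalIntegrable _ _
  have hintFPH : IntervalIntegrable (fun θ : ℝ => (f (circleMap 0 r θ) * pfun (circleMap 0 r θ)) *
      conj (hfun (circleMap 0 r θ))) MeasureTheory.volume 0 (2*π) :=
    (contFP.mul (Complex.continuous_conj.comp contH)).intervalIntegrable _ _
  have hintFPFP : IntervalIntegrable (fun θ : ℝ => (f (circleMap 0 r θ) * pfun (circleMap 0 r θ)) *
      conj (f (circleMap 0 r θ) * pfun (circleMap 0 r θ))) MeasureTheory.volume 0 (2*π) :=
    (contFP.mul (Complex.continuous_conj.comp contFP)).intervalIntegrable _ _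
  have IEr : ((Er : ℝ) : ℂ) = ((Nr : ℝ) : ℂ) - ((Pr : ℝ) : ℂ) - ((Pr : ℝ) : ℂ) + ((Fr : ℝ) : ℂ) := by
    rw [hEr, ← intervalIntegral.integral_ofReal]
    have : (fun θ : ℝ => ((Complex.normSq (hfun (circleMap 0 r θ) -
        f (circleMap 0 r θ) * pfun (circleMap 0 r θ)) : ℝ) : ℂ))
        = fun θ : ℝ =>
          (hfun (circleMap 0 r θ) * conj (hfun (circleMap 0 r θ))
            - hfun (circleMap 0 r θ) * conj (f (circleMap 0 r θ) * pfun (circleMap 0 r θ)))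
          - ((f (circleMap 0 r θ) * pfun (circleMap 0 r θ)) * conj (hfun (circleMap 0 r θ))
            - (f (circleMap 0 r θ) * pfun (circleMap 0 r θ)) *
                conj (f (circleMap 0 r θ) * pfun (circleMap 0 r θ))) := by
      funext θ
      rw [← Complex.mul_conj, map_sub (starRingEnd ℂ)]
      ring
    rw [this, intervalIntegral.integral_sub (hintHH.sub hintHFP) (hintFPH.sub hintFPFP),
      intervalIntegral.integral_sub hintHH hintHFP,
      intervalIntegral.integral_sub hintFPH hintFPFP,
      IHH, ICross', ICross, ← IFr]
    ring
  -- real inequalities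
  have hpi : (0:ℝ) ≤ 2 * π := by positivity
  have hEnn : 0 ≤ Er := by
    rw [hEr]
    apply intervalIntegral.integral_nonneg hpi
    intro θ _
    exact Complex.normSq_nonneg _
  have hFrPr : Fr ≤ Pr := by
    rw [hFr, hPr]
    apply intervalIntegral.integral_mono_on hpi
    · exact ((Complex.continuous_normSq).comp contFP).intervalIntegrable _ _
    · exact ((Complex.continuous_normSq).comp contP).intervalIntegrable _ _
    · intro θ _
      rw [Complex.normSq_mul]
      have hz : circleMap 0 r θ ∈ ball (0:ℂ) 1 := hsub (hcirc_mem θ)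
      have := hb _ hz
      have h1 : Complex.normSq (f (circleMap 0 r θ)) ≤ 1 := by
        rw [Complex.normSq_eq_norm_sq]
        nlinarith [norm_nonneg (f (circleMap 0 r θ))]
      nlinarith [Complex.normSq_nonneg (pfun (circleMap 0 r θ)),
        Complex.normSq_nonneg (f (circleMap 0 r θ))]
  have hEreq : Er = Nr - Pr - Pr + Fr := by
    have := IEr
    push_cast at this
    exact_mod_cast this
  have hPrNr : Pr ≤ Nr := by linarith
  -- final identity
  refine ⟨(Nr - Pr) / (2 * π), div_nonneg (by linarith) (by positivity), ?_⟩
  have hpine : ((2 * π : ℝ) : ℂ) ≠ 0 :=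
    Complex.ofReal_ne_zero.mpr (by positivity : (0:ℝ) < 2 * π).ne'
  have hhv : ∀ k, hfun (ζ k) = ∑ j, conj (x j) * pickK r (ζ j) (ζ k) := fun k => rfl
  have hpv : ∀ k, pfun (ζ k) = ∑ j, (conj (x j) * conj (w j)) * pickK r (ζ j) (ζ k) :=
    fun k => rfl
  have hS0 : (∑ k, ∑ j, conj (x k) * ((1 - conj (w k) * w j) * pickK r (ζ k) (ζ j)) * x j)
      = (∑ k, x k * hfun (ζ k)) - ∑ k, x k * (w k * pfun (ζ k)) := by
    rw [Finset.sum_comm, ← Finset.sum_sub_distrib]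
    refine Finset.sum_congr rfl (fun b _ => ?_)
    rw [hhv b, hpv b, Finset.mul_sum, Finset.mul_sum, Finset.mul_sum, ← Finset.sum_sub_distrib]
    refine Finset.sum_congr rfl (fun k _ => ?_)
    ring
  have key2 : ((2 * π : ℝ) : ℂ) * ((∑ k, x k * hfun (ζ k)) - ∑ k, x k * (w k * pfun (ζ k)))
      = ((Nr - Pr : ℝ) : ℂ) := by
    push_cast
    rw [mul_sub, ← INr, ← IPr]
  rw [hS0]
  apply mul_left_cancel₀ hpine
  rw [key2, ← Complex.ofReal_mul]
  congr 1
  field_simp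

/-- If `ζ₁,…,ζₙ` are distinct points of the open unit disk and `w₁,…,wₙ` are complex
numbers such that some analytic `w : 𝔻 → ℂ` with `‖w‖ ≤ 1` interpolates
`w(ζₖ) = wₖ`, then the Pick matrix `[(1 - conj wₖ · wⱼ)/(1 - conj ζₖ · ζⱼ)]` is
positive semidefinite. -/
theorem stmt_5 (n : ℕ) (ζ w : Fin n → ℂ)
    (hζ : ∀ k, ζ k ∈ ball (0 : ℂ) 1)
    (hinj : Function.Injective ζ)
    (hex : ∃ f : ℂ → ℂ, DifferentiableOn ℂ f (ball (0 : ℂ) 1) ∧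
      (∀ z ∈ ball (0 : ℂ) 1, ‖f z‖ ≤ 1) ∧ ∀ k, f (ζ k) = w k) :
    (Matrix.of fun k j : Fin n =>
      (1 - conj (w k) * w j) / (1 - conj (ζ k) * ζ j)).PosSemidef := by
  obtain ⟨f, hf, hb, hint⟩ := hex
  have hζn : ∀ k, ‖ζ k‖ < 1 := fun k => by simpa [mem_ball_zero_iff] using hζ k
  have hden1 : ∀ k j, (1 : ℂ) - conj (ζ k) * ζ j ≠ 0 := by
    intro k j h
    rw [sub_eq_zero] at h
    have := congrArg norm h
    rw [norm_one, norm_mul, RCLike.norm_conj] at this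
    nlinarith [hζn k, hζn j, norm_nonneg (ζ k), norm_nonneg (ζ j)]
  refine Matrix.posSemidef_iff_dotProduct_mulVec.mpr ⟨?_, ?_⟩
  · -- Hermitian
    ext k j
    simp only [Matrix.conjTranspose_apply, Matrix.of_apply, RCLike.star_def, map_div₀, map_sub,
      map_one, map_mul, Complex.conj_conj]
    ring
  · intro x
    -- the quadratic form
    have hform : dotProduct (star x) ((Matrix.of fun k j : Fin n =>
        (1 - conj (w k) * w j) / (1 - conj (ζ k) * ζ j)).mulVec x)
        = ∑ k, ∑ j, conj (x k) *
            ((1 - conj (w k) * w j) / (1 - conj (ζ k) * ζ j)) * x j := by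
      simp only [dotProduct, Matrix.mulVec, Pi.star_apply, RCLike.star_def,
        Matrix.of_apply, Finset.mul_sum]
      refine Finset.sum_congr rfl (fun k _ => Finset.sum_congr rfl (fun j _ => by ring))
    rw [hform]
    -- the family of quadratic forms
    set G : ℝ → ℂ := fun r => ∑ k, ∑ j, conj (x k) *
        ((1 - conj (w k) * w j) * pickK r (ζ k) (ζ j)) * x j with hG
    -- value at r = 1
    have hG1 : G 1 = ∑ k, ∑ j, conj (x k) *
        ((1 - conj (w k) * w j) / (1 - conj (ζ k) * ζ j)) * x j := by
      refine Finset.sum_congr rfl (fun k _ => Finset.sum_congr rfl (fun j _ => ?_))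
      have : pickK 1 (ζ k) (ζ j) = 1 / (1 - conj (ζ k) * ζ j) := by
        norm_num [pickK]
      rw [this]
      ring
    -- continuity of G at 1
    have htend : Filter.Tendsto G (nhdsWithin 1 (Set.Iio 1)) (nhds (G 1)) := by
      apply Filter.Tendsto.mono_left _ nhdsWithin_le_nhds
      show Filter.Tendsto G (nhds 1) (nhds (G 1))
      simp only [hG]
      apply tendsto_finset_sum
      intro k _
      apply tendsto_finset_sum
      intro j _
      refine Filter.Tendsto.mul (Filter.Tendsto.mul tendsto_const_nhds ?_) tendsto_const_nhds
      refine Filter.Tendsto.mul tendsto_const_nhds ?_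
      have hca : ContinuousAt (fun r : ℝ => pickK r (ζ k) (ζ j)) 1 := by
        apply ContinuousAt.div
        · exact (Complex.continuous_ofReal.continuousAt).pow 2
        · exact ((Complex.continuous_ofReal.continuousAt).pow 2).sub continuousAt_const
        · simpa using hden1 k j
      exact hca
    -- eventual nonnegativity
    have hev : ∀ᶠ r in nhdsWithin 1 (Set.Iio 1), ∃ t : ℝ, 0 ≤ t ∧ G r = (t : ℂ) := by
      have h1 : ∀ᶠ r in nhds (1:ℝ), 0 < r := eventually_gt_nhds one_pos
      have h2 : ∀ᶠ r in nhds (1:ℝ), ∀ k, ‖ζ k‖ < r := by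
        rw [Filter.eventually_all]
        exact fun k => eventually_gt_nhds (hζn k)
      have h3 : ∀ᶠ r in nhdsWithin (1:ℝ) (Set.Iio 1), r < 1 :=
        eventually_mem_nhdsWithin
      filter_upwards [h3, (h1.and h2).filter_mono nhdsWithin_le_nhds] with r hr3 hr12
      exact pick_key n ζ w f hf hb hint x r hr12.1 hr3 hr12.2
    -- conclude
    have hne : (nhdsWithin (1:ℝ) (Set.Iio 1)).NeBot := by infer_instance
    have hre : 0 ≤ (G 1).re := by
      apply ge_of_tendsto ((Complex.continuous_re.tendsto _).comp htend)
      filter_upwards [hev] with r hr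
      obtain ⟨t, ht, hGr⟩ := hr
      simp [hGr, ht]
    have him : (G 1).im = 0 := by
      have htendim : Filter.Tendsto (fun r => (G r).im) (nhdsWithin 1 (Set.Iio 1))
          (nhds ((G 1).im)) := (Complex.continuous_im.tendsto _).comp htend
      have : Filter.Tendsto (fun r => (G r).im) (nhdsWithin 1 (Set.Iio 1)) (nhds 0) := by
        apply Filter.Tendsto.congr' _ tendsto_const_nhds
        filter_upwards [hev] with r hr
        obtain ⟨t, ht, hGr⟩ := hr
        simp [hGr]
      exact tendsto_nhds_unique htendim this
    rw [← hG1]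
    rw [Complex.nonneg_iff]
    exact ⟨hre, him.symm⟩
end

section
/- Given Hilbert spaces H₀, E₁, E₂ and linear maps T₁, T₂ on a vector space X, M₁ : X → E₁, M₂ : X → E₂, and a positive semidefinite sesquilinear form D on X satisfying D(T₂x,T₂y) - D(T₁x,T₁y) = ⟨M₁x,M₁y⟩ - ⟨M₂x,M₂y⟩ for all x,y, the map V sending ([T₁x], M₁x) to ([T₂x], M₂x) (where [·] denotes the D-equivalence class in the Hilbert space completion H₀) is well-defined and isometric on its domain. -/
open ComplexConjugate

lemma aux_r (r q : ℝ) (hq : 0 ≤ q) (h : ∀ s : ℝ, 0 ≤ s * r + s^2 * q) : r = 0 := by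
  by_contra hr
  have hq1 : (0:ℝ) < q + 1 := by linarith
  have hp : (0:ℝ) < (q+1)^2 := by positivity
  have h2 : (0:ℝ) ≤ -r^2 / (q+1)^2 := by
    have h1 := h (-r / (q + 1))
    have h3 : (-r/(q+1)) * r + (-r/(q+1))^2 * q = -r^2 / (q+1)^2 := by
      field_simp; ring
    linarith [h3 ▸ h1]
  rw [le_div_iff₀ hp] at h2
  have : 0 < r^2 := by positivity
  nlinarith

lemma aux_deg {X : Type*} [AddCommGroup X] [Module ℂ X]
    (D : X → X → ℂ)
    (hadd₁ : ∀ x y z : X, D (x + y) z = D x z + D y z)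
    (hsmul₁ : ∀ (c : ℂ) (x y : X), D (c • x) y = conj c * D x y)
    (hadd₂ : ∀ x y z : X, D x (y + z) = D x y + D x z)
    (hsmul₂ : ∀ (c : ℂ) (x y : X), D x (c • y) = c * D x y)
    (hherm : ∀ x y : X, D y x = conj (D x y))
    (hpsd : ∀ x : X, 0 ≤ (D x x).re ∧ (D x x).im = 0)
    (a y : X) (ha : D a a = 0) : D a y = 0 := by
  have expand : ∀ t : ℂ, D (a + t • y) (a + t • y)
      = t * D a y + conj t * conj (D a y) + conj t * t * D y y := by
    intro t
    rw [hadd₁, hadd₂, hadd₂, hsmul₂, hsmul₁, hsmul₁, hsmul₂, ha, hherm a y]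
    ring
  set c := D a y with hc
  set q := (D y y).re with hq
  have hqnn : 0 ≤ q := (hpsd y).1
  have hre : c.re = 0 := by
    have key : 2 * c.re = 0 := by
      refine aux_r _ q hqnn fun s => ?_
      have h0 := (hpsd (a + (s:ℂ) • y)).1
      rw [expand (s:ℂ)] at h0
      have heq : ((s:ℂ) * c + conj (s:ℂ) * conj c + conj (s:ℂ) * (s:ℂ) * D y y).re
          = s * (2 * c.re) + s^2 * q := by
        simp [Complex.add_re, Complex.mul_re, Complex.conj_re, Complex.conj_im,
          Complex.ofReal_re, Complex.ofReal_im, hq]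
        ring
      rw [heq] at h0
      linarith
    linarith
  have him : c.im = 0 := by
    have key : -2 * c.im = 0 := by
      refine aux_r _ q hqnn fun s => ?_
      have h0 := (hpsd (a + ((s:ℂ) * Complex.I) • y)).1
      rw [expand ((s:ℂ) * Complex.I)] at h0
      have heq : (((s:ℂ) * Complex.I) * c + conj ((s:ℂ) * Complex.I) * conj c
          + conj ((s:ℂ) * Complex.I) * ((s:ℂ) * Complex.I) * D y y).re
          = s * (-2 * c.im) + s^2 * q := by
        simp [Complex.add_re, Complex.mul_re, Complex.mul_im, Complex.conj_re, Complex.conj_im,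
          Complex.ofReal_re, Complex.ofReal_im, Complex.I_re, Complex.I_im, hq]
        ring
      rw [heq] at h0
      linarith
    linarith
  rw [hc] at *
  exact Complex.ext hre him

/-- Given a complex vector space `X`, a positive semidefinite sesquilinear form `D`
on `X` (conjugate-linear in the first argument), linear maps `T₁, T₂ : X → X`,
`M₁ : X → E₁`, `M₂ : X → E₂` into Hilbert spaces satisfying the fundamental identity
`D(T₂x,T₂y) - D(T₁x,T₁y) = ⟨M₁x,M₁y⟩ - ⟨M₂x,M₂y⟩`, the map
`V : ([T₁x], M₁x) ↦ ([T₂x], M₂x)` is well defined (it respects `D`-equivalence) and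
isometric on its domain. -/
theorem stmt_11
    {X : Type*} [AddCommGroup X] [Module ℂ X]
    {E₁ E₂ : Type*}
    [NormedAddCommGroup E₁] [InnerProductSpace ℂ E₁] [CompleteSpace E₁]
    [NormedAddCommGroup E₂] [InnerProductSpace ℂ E₂] [CompleteSpace E₂]
    (D : X → X → ℂ)
    (hadd₁ : ∀ x y z : X, D (x + y) z = D x z + D y z)
    (hsmul₁ : ∀ (c : ℂ) (x y : X), D (c • x) y = conj c * D x y)
    (hadd₂ : ∀ x y z : X, D x (y + z) = D x y + D x z)
    (hsmul₂ : ∀ (c : ℂ) (x y : X), D x (c • y) = c * D x y)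
    (hherm : ∀ x y : X, D y x = conj (D x y))
    (hpsd : ∀ x : X, 0 ≤ (D x x).re ∧ (D x x).im = 0)
    (T₁ T₂ : X →ₗ[ℂ] X) (M₁ : X →ₗ[ℂ] E₁) (M₂ : X →ₗ[ℂ] E₂)
    (hfund : ∀ x y : X,
      D (T₂ x) (T₂ y) - D (T₁ x) (T₁ y) =
        (inner ℂ (M₁ x) (M₁ y) : ℂ) - (inner ℂ (M₂ x) (M₂ y) : ℂ)) :
    (∀ x x' : X,
      ((∀ y : X, D (T₁ x) y = D (T₁ x') y) ∧ M₁ x = M₁ x') →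
      ((∀ y : X, D (T₂ x) y = D (T₂ x') y) ∧ M₂ x = M₂ x')) ∧
    (∀ x : X, (D (T₂ x) (T₂ x)).re + ‖M₂ x‖ ^ 2 = (D (T₁ x) (T₁ x)).re + ‖M₁ x‖ ^ 2) := by
  have hsub : ∀ a b y : X, D (a - b) y = D a y - D b y := by
    intro a b y
    have h := hadd₁ (a - b) b y
    rw [sub_add_cancel] at h
    exact eq_sub_of_add_eq h.symm
  constructor
  · rintro x x' ⟨hD1, hM1⟩
    set z := x - x' with hz
    have hT1z : ∀ y, D (T₁ z) y = 0 := by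
      intro y
      rw [hz, map_sub, hsub, hD1 y, sub_self]
    have hM1z : M₁ z = 0 := by rw [hz, map_sub, hM1, sub_self]
    have hf := hfund z z
    rw [hT1z (T₁ z), hM1z] at hf
    simp only [inner_zero_left, zero_sub, sub_zero] at hf
    -- hf : D (T₂ z) (T₂ z) = - inner (M₂ z) (M₂ z)
    have hinn : (inner ℂ (M₂ z) (M₂ z) : ℂ) = (‖M₂ z‖^2 : ℝ) := by
      rw [inner_self_eq_norm_sq_to_K]
      norm_cast
    rw [hinn] at hf
    have hre : (D (T₂ z) (T₂ z)).re = -(‖M₂ z‖^2) := by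
      rw [hf, Complex.neg_re, Complex.ofReal_re]
    have h1 := (hpsd (T₂ z)).1
    have h2 : (0:ℝ) ≤ ‖M₂ z‖^2 := by positivity
    have hM2n : ‖M₂ z‖^2 = 0 := by linarith
    have hM2z : M₂ z = 0 := by
      have : ‖M₂ z‖ = 0 := by
        have := sq_eq_zero_iff.mp hM2n
        exact this
      exact norm_eq_zero.mp this
    have hDz : D (T₂ z) (T₂ z) = 0 := by
      apply Complex.ext
      · simp only [Complex.zero_re]; linarith
      · simp only [Complex.zero_im]; exact (hpsd (T₂ z)).2
    constructor
    · intro y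
      have hdeg := aux_deg D hadd₁ hsmul₁ hadd₂ hsmul₂ hherm hpsd (T₂ z) y hDz
      rw [hz, map_sub, hsub] at hdeg
      linear_combination hdeg
    · have : M₂ x - M₂ x' = 0 := by rw [← map_sub]; exact hM2z
      exact sub_eq_zero.mp this
  · intro x
    have hf := hfund x x
    have h1 : (inner ℂ (M₁ x) (M₁ x) : ℂ) = (‖M₁ x‖^2 : ℝ) := by
      rw [inner_self_eq_norm_sq_to_K]; norm_cast
    have h2 : (inner ℂ (M₂ x) (M₂ x) : ℂ) = (‖M₂ x‖^2 : ℝ) := by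
      rw [inner_self_eq_norm_sq_to_K]; norm_cast
    rw [h1, h2] at hf
    have := congrArg Complex.re hf
    simp only [Complex.sub_re, Complex.ofReal_re] at this
    linarith
end
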